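/- If $\overline{G}$ is a connected graph with $diam(\overline{G}) > 3$, then $G$ is connected and $trc(G) \leq 7$. -/

import Mathlib

open SimpleGraph

/-- A total coloring (edge colors `cE`, vertex colors `cV`) makes `G`
total-rainbow connected if any two distinct vertices are joined by a path
whose edges and internal vertices receive pairwise distinct colors. -/
def IsTRCColoring {V : Type*} (G : SimpleGraph V) {k : ℕ}
    (cE : Sym2 V → Fin k) (cV : V → Fin k) : Prop :=
  ∀ u v : V, u ≠ v → ∃ p : G.Walk u v, p.IsPath ∧
    (p.edges.map cE ++ p.support.tail.dropLast.map cV).Nodup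

/-- The total-rainbow connection number of `G`. -/
noncomputable def trc {V : Type*} (G : SimpleGraph V) : ℕ :=
  sInf {k | ∃ (cE : Sym2 V → Fin k) (cV : V → Fin k), IsTRCColoring G cE cV}

-- aux
def TRCpair {V : Type*} (G : SimpleGraph V) (cE : Sym2 V → Fin 7) (cV : V → Fin 7)
    (x y : V) : Prop :=
  ∃ p : G.Walk x y, p.IsPath ∧
    (p.edges.map cE ++ p.support.tail.dropLast.map cV).Nodup

lemma tail_dropLast_comm {α : Type*} (l : List α) : l.tail.dropLast = l.dropLast.tail := by
  match l with
  | [] => rfl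
  | [a] => rfl
  | a :: b :: t => rfl

lemma internal_reverse {α : Type*} (l : List α) :
    l.reverse.tail.dropLast = l.tail.dropLast.reverse := by
  rw [List.tail_reverse]
  have h2 : (l.dropLast.reverse).dropLast = l.dropLast.tail.reverse := by
    have := List.tail_reverse (l := l.dropLast.reverse)
    rw [List.reverse_reverse] at this
    calc (l.dropLast.reverse).dropLast
        = ((l.dropLast.reverse).dropLast.reverse).reverse := by rw [List.reverse_reverse]
      _ = l.dropLast.tail.reverse := by rw [← this]
  rw [h2, tail_dropLast_comm]

lemma TRCpair_symm {V : Type*} {G : SimpleGraph V} {cE : Sym2 V → Fin 7} {cV : V → Fin 7}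
    {x y : V} (h : TRCpair G cE cV x y) : TRCpair G cE cV y x := by
  obtain ⟨p, hp, hnd⟩ := h
  refine ⟨p.reverse, hp.reverse, ?_⟩
  rw [Walk.edges_reverse, Walk.support_reverse, internal_reverse, List.map_reverse,
    List.map_reverse]
  exact (((p.edges.map cE).reverse_perm).append
    ((p.support.tail.dropLast.map cV).reverse_perm)).symm.nodup hnd

def eTab : Fin 5 → Fin 5 → Fin 7
  | 0, 1 => 2 | 1, 0 => 2
  | 0, 2 => 3 | 2, 0 => 3
  | 0, 4 => 4 | 4, 0 => 4
  | 1, 3 => 4 | 3, 1 => 4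
  | 1, 4 => 3 | 4, 1 => 3
  | 2, 3 => 5 | 3, 2 => 5
  | _, _ => 0

lemma eTab_symm : ∀ i j, eTab i j = eTab j i := by decide

open Classical in
noncomputable def clsF {V : Type*} (G : SimpleGraph V) (u w x : V) : Fin 5 :=
  if x = u then 0 else if x = w then 1 else if Gᶜ.Adj w x then 2
  else if Gᶜ.Adj u x then 3 else 4

open Classical in
noncomputable def cVF {V : Type*} (u w x : V) : Fin 7 :=
  if x = u then 0 else if x = w then 1 else 6

noncomputable def cEF {V : Type*} (G : SimpleGraph V) (u w : V) : Sym2 V → Fin 7 :=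
  Sym2.lift ⟨fun x y => eTab (clsF G u w x) (clsF G u w y),
    fun x y => eTab_symm (clsF G u w x) (clsF G u w y)⟩

lemma cEF_mk {V : Type*} (G : SimpleGraph V) (u w x y : V) :
    cEF G u w s(x, y) = eTab (clsF G u w x) (clsF G u w y) := rfl

section cls
variable {V : Type*} (G : SimpleGraph V) (u w : V)

lemma clsF_u : clsF G u w u = 0 := by simp [clsF]

lemma clsF_w (h : w ≠ u) : clsF G u w w = 1 := by simp [clsF, h]

lemma clsF_A {a : V} (h1 : a ≠ u) (h2 : a ≠ w) (h3 : Gᶜ.Adj w a) :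
    clsF G u w a = 2 := by simp [clsF, h1, h2, h3]

lemma clsF_B {b : V} (h1 : b ≠ u) (h2 : b ≠ w) (h3 : ¬ Gᶜ.Adj w b) (h4 : Gᶜ.Adj u b) :
    clsF G u w b = 3 := by simp [clsF, h1, h2, h3, h4]

lemma clsF_C {c : V} (h1 : c ≠ u) (h2 : c ≠ w) (h3 : ¬ Gᶜ.Adj w c) (h4 : ¬ Gᶜ.Adj u c) :
    clsF G u w c = 4 := by simp [clsF, h1, h2, h3, h4]

lemma cVF_u : cVF u w u = 0 := by simp [cVF]

lemma cVF_w (h : w ≠ u) : cVF u w w = 1 := by simp [cVF, h]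

lemma cVF_o {x : V} (h1 : x ≠ u) (h2 : x ≠ w) : cVF u w x = 6 := by simp [cVF, h1, h2]

end cls

theorem stmt_14 {V : Type*} [Fintype V] (G : SimpleGraph V)
    (hcconn : Gᶜ.Connected) (hdiam : 3 < Gᶜ.diam) :
    G.Connected ∧ trc G ≤ 7 := by
  classical
  have hV : Nonempty V := hcconn.nonempty
  obtain ⟨u, w, huw⟩ := Gᶜ.exists_dist_eq_diam
  have h4 : 3 < Gᶜ.dist u w := by rw [huw]; exact hdiam
  have hlen : ∀ p : Gᶜ.Walk u w, 3 < p.length := fun p => lt_of_lt_of_le h4 (Gᶜ.dist_le p)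
  have hUW : u ≠ w := by
    rintro rfl
    have := hlen Walk.nil
    simp at this
  have hn1 : ¬ Gᶜ.Adj u w := fun h => by have := hlen h.toWalk; simp at this
  have hn2 : ∀ x, Gᶜ.Adj u x → Gᶜ.Adj x w → False := fun x h1 h2 => by
    have := hlen (Walk.cons h1 (Walk.cons h2 Walk.nil)); simp at this
  have hn3 : ∀ x y, Gᶜ.Adj u x → Gᶜ.Adj x y → Gᶜ.Adj y w → False := fun x y h1 h2 h3 => by
    have := hlen (Walk.cons h1 (Walk.cons h2 (Walk.cons h3 Walk.nil))); simp at this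
  have F1 : G.Adj u w := by
    by_contra h
    exact hn1 ((G.compl_adj u w).mpr ⟨hUW, h⟩)
  have F2 : ∀ a, Gᶜ.Adj w a → G.Adj u a := by
    intro a ha
    have hau : a ≠ u := by
      rintro rfl
      exact hn1 ha.symm
    by_contra h
    exact hn2 a ((G.compl_adj u a).mpr ⟨hau.symm, fun h' => h h'⟩) ha.symm
  have F3 : ∀ b, Gᶜ.Adj u b → G.Adj w b := by
    intro b hb
    have hbw : b ≠ w := by
      rintro rfl
      exact hn1 hb
    by_contra h
    exact hn2 b hb ((G.compl_adj b w).mpr ⟨hbw, fun h' => h h'.symm⟩)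
  have FABne : ∀ a b, Gᶜ.Adj w a → Gᶜ.Adj u b → a ≠ b := by
    rintro a b ha hb rfl
    exact hn2 a hb ha.symm
  have F4 : ∀ a b, Gᶜ.Adj w a → Gᶜ.Adj u b → G.Adj a b := by
    intro a b ha hb
    by_contra h
    exact hn3 b a hb ((G.compl_adj b a).mpr ⟨(FABne a b ha hb).symm, fun h' => h h'.symm⟩) ha.symm
  have FCu : ∀ c, c ≠ u → ¬ Gᶜ.Adj u c → G.Adj u c := by
    intro c h1 h2
    by_contra h
    exact h2 ((G.compl_adj u c).mpr ⟨h1.symm, h⟩)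
  have FCw : ∀ c, c ≠ w → ¬ Gᶜ.Adj w c → G.Adj w c := by
    intro c h1 h2
    by_contra h
    exact h2 ((G.compl_adj w c).mpr ⟨h1.symm, h⟩)
  have Fdisj : ∀ x, Gᶜ.Adj u x → ¬ Gᶜ.Adj w x := fun x h1 h2 => hn2 x h1 h2.symm
  -- nonempty A and B
  obtain ⟨a0, ha0⟩ : ∃ a, Gᶜ.Adj w a := by
    obtain ⟨p⟩ := hcconn.preconnected w u
    cases p with
    | nil => exact absurd rfl hUW
    | cons h q => exact ⟨_, h⟩
  obtain ⟨b0, hb0⟩ : ∃ b, Gᶜ.Adj u b := by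
    obtain ⟨p⟩ := hcconn.preconnected u w
    cases p with
    | nil => exact absurd rfl hUW
    | cons h q => exact ⟨_, h⟩
  have ha0u : a0 ≠ u := (F2 a0 ha0).ne'
  have ha0w : a0 ≠ w := ha0.ne'
  have hb0u : b0 ≠ u := hb0.ne'
  have hb0w : b0 ≠ w := (F3 b0 hb0).ne'
  have hclsu : clsF G u w u = 0 := clsF_u G u w
  have hclsw : clsF G u w w = 1 := clsF_w G u w (Ne.symm hUW)
  have hcVu : cVF u w u = (0 : Fin 7) := cVF_u u w
  have hcVw : cVF u w w = (1 : Fin 7) := cVF_w u w (Ne.symm hUW)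
  have hclsa0 : clsF G u w a0 = 2 := clsF_A G u w ha0u ha0w ha0
  have hclsb0 : clsF G u w b0 = 3 := clsF_B G u w hb0u hb0w (Fdisj b0 hb0) hb0
  have P_uw : TRCpair G (cEF G u w) (cVF u w) u w := by
    refine ⟨Walk.cons F1 Walk.nil, ?_, ?_⟩
    · simp [Walk.isPath_def, hUW]
    · simp only [Walk.edges_cons, Walk.edges_nil, Walk.support_cons, Walk.support_nil,
        List.tail_cons, List.dropLast, List.map_cons, List.map_nil, cEF_mk, hclsu, hclsw]
      decide
  have P_uA : ∀ a, Gᶜ.Adj w a → TRCpair G (cEF G u w) (cVF u w) u a := by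
    intro a ha
    have hau : a ≠ u := (F2 a ha).ne'
    have haw : a ≠ w := ha.ne'
    refine ⟨Walk.cons (F2 a ha) Walk.nil, ?_, ?_⟩
    · simp [Walk.isPath_def, hau.symm]
    · simp only [Walk.edges_cons, Walk.edges_nil, Walk.support_cons, Walk.support_nil,
        List.tail_cons, List.dropLast, List.map_cons, List.map_nil, cEF_mk, hclsu,
        clsF_A G u w hau haw ha]
      decide
  have P_uB : ∀ b, Gᶜ.Adj u b → TRCpair G (cEF G u w) (cVF u w) u b := by
    intro b hb
    have hbu : b ≠ u := hb.ne'
    have hbw : b ≠ w := (F3 b hb).ne'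
    refine ⟨Walk.cons F1 (Walk.cons (F3 b hb) Walk.nil), ?_, ?_⟩
    · simp [Walk.isPath_def, hUW, hbu.symm, hbw.symm]
    · simp only [Walk.edges_cons, Walk.edges_nil, Walk.support_cons, Walk.support_nil,
        List.tail_cons, List.dropLast, List.map_cons, List.map_nil, cEF_mk, hclsu, hclsw,
        hcVw, clsF_B G u w hbu hbw (Fdisj b hb) hb]
      decide
  have P_uC : ∀ c, c ≠ u → c ≠ w → ¬ Gᶜ.Adj w c → ¬ Gᶜ.Adj u c →
      TRCpair G (cEF G u w) (cVF u w) u c := by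
    intro c h1 h2 h3 h4
    refine ⟨Walk.cons (FCu c h1 h4) Walk.nil, ?_, ?_⟩
    · simp [Walk.isPath_def, h1.symm]
    · simp only [Walk.edges_cons, Walk.edges_nil, Walk.support_cons, Walk.support_nil,
        List.tail_cons, List.dropLast, List.map_cons, List.map_nil, cEF_mk, hclsu,
        clsF_C G u w h1 h2 h3 h4]
      decide
  have P_wA : ∀ a, Gᶜ.Adj w a → TRCpair G (cEF G u w) (cVF u w) w a := by
    intro a ha
    have hau : a ≠ u := (F2 a ha).ne'
    have haw : a ≠ w := ha.ne'
    refine ⟨Walk.cons F1.symm (Walk.cons (F2 a ha) Walk.nil), ?_, ?_⟩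
    · simp [Walk.isPath_def, hUW, hUW.symm, hau.symm, haw.symm]
    · simp only [Walk.edges_cons, Walk.edges_nil, Walk.support_cons, Walk.support_nil,
        List.tail_cons, List.dropLast, List.map_cons, List.map_nil, cEF_mk, hclsu, hclsw,
        hcVu, clsF_A G u w hau haw ha]
      decide
  have P_wB : ∀ b, Gᶜ.Adj u b → TRCpair G (cEF G u w) (cVF u w) w b := by
    intro b hb
    have hbu : b ≠ u := hb.ne'
    have hbw : b ≠ w := (F3 b hb).ne'
    refine ⟨Walk.cons (F3 b hb) Walk.nil, ?_, ?_⟩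
    · simp [Walk.isPath_def, hbw.symm]
    · simp only [Walk.edges_cons, Walk.edges_nil, Walk.support_cons, Walk.support_nil,
        List.tail_cons, List.dropLast, List.map_cons, List.map_nil, cEF_mk, hclsw,
        clsF_B G u w hbu hbw (Fdisj b hb) hb]
      decide
  have P_wC : ∀ c, c ≠ u → c ≠ w → ¬ Gᶜ.Adj w c → ¬ Gᶜ.Adj u c →
      TRCpair G (cEF G u w) (cVF u w) w c := by
    intro c h1 h2 h3 h4
    refine ⟨Walk.cons (FCw c h2 h3) Walk.nil, ?_, ?_⟩
    · simp [Walk.isPath_def, h2.symm]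
    · simp only [Walk.edges_cons, Walk.edges_nil, Walk.support_cons, Walk.support_nil,
        List.tail_cons, List.dropLast, List.map_cons, List.map_nil, cEF_mk, hclsw,
        clsF_C G u w h1 h2 h3 h4]
      decide
  have P_AB : ∀ a b, Gᶜ.Adj w a → Gᶜ.Adj u b → TRCpair G (cEF G u w) (cVF u w) a b := by
    intro a b ha hb
    have hau : a ≠ u := (F2 a ha).ne'
    have haw : a ≠ w := ha.ne'
    have hbu : b ≠ u := hb.ne'
    have hbw : b ≠ w := (F3 b hb).ne'
    refine ⟨Walk.cons (F4 a b ha hb) Walk.nil, ?_, ?_⟩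
    · simp [Walk.isPath_def, FABne a b ha hb]
    · simp only [Walk.edges_cons, Walk.edges_nil, Walk.support_cons, Walk.support_nil,
        List.tail_cons, List.dropLast, List.map_cons, List.map_nil, cEF_mk,
        clsF_A G u w hau haw ha, clsF_B G u w hbu hbw (Fdisj b hb) hb]
      decide
  have P_AA : ∀ a a', Gᶜ.Adj w a → Gᶜ.Adj w a' → a ≠ a' →
      TRCpair G (cEF G u w) (cVF u w) a a' := by
    intro a a' ha ha' hne
    have hau : a ≠ u := (F2 a ha).ne'
    have haw : a ≠ w := ha.ne'
    have ha'u : a' ≠ u := (F2 a' ha').ne'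
    have ha'w : a' ≠ w := ha'.ne'
    have hab0 : a ≠ b0 := FABne a b0 ha hb0
    have ha'b0 : a' ≠ b0 := FABne a' b0 ha' hb0
    refine ⟨Walk.cons (F2 a ha).symm (Walk.cons F1 (Walk.cons (F3 b0 hb0)
      (Walk.cons (F4 a' b0 ha' hb0).symm Walk.nil))), ?_, ?_⟩
    · simp [Walk.isPath_def, hau, haw, hab0, hne, hUW, hb0u.symm, hb0w.symm, ha'u.symm,
        ha'w.symm, ha'b0.symm]
    · simp only [Walk.edges_cons, Walk.edges_nil, Walk.support_cons, Walk.support_nil,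
        List.tail_cons, List.dropLast, List.map_cons, List.map_nil, cEF_mk,
        hclsu, hclsw, hclsb0, hcVu, hcVw,
        clsF_A G u w hau haw ha, clsF_A G u w ha'u ha'w ha',
        cVF_o u w hb0u hb0w]
      decide
  have P_BB : ∀ b b', Gᶜ.Adj u b → Gᶜ.Adj u b' → b ≠ b' →
      TRCpair G (cEF G u w) (cVF u w) b b' := by
    intro b b' hb hb' hne
    have hbu : b ≠ u := hb.ne'
    have hbw : b ≠ w := (F3 b hb).ne'
    have hb'u : b' ≠ u := hb'.ne'
    have hb'w : b' ≠ w := (F3 b' hb').ne'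
    have ha0b : a0 ≠ b := FABne a0 b ha0 hb
    have ha0b' : a0 ≠ b' := FABne a0 b' ha0 hb'
    refine ⟨Walk.cons (F3 b hb).symm (Walk.cons F1.symm (Walk.cons (F2 a0 ha0)
      (Walk.cons (F4 a0 b' ha0 hb') Walk.nil))), ?_, ?_⟩
    · simp [Walk.isPath_def, hbu, hbw, ha0b.symm, hne, hUW, ha0u.symm, ha0w.symm,
        hb'u.symm, hb'w.symm, ha0b', hUW.symm]
    · simp only [Walk.edges_cons, Walk.edges_nil, Walk.support_cons, Walk.support_nil,
        List.tail_cons, List.dropLast, List.map_cons, List.map_nil, cEF_mk,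
        hclsu, hclsw, hclsa0, hcVu, hcVw,
        clsF_B G u w hbu hbw (Fdisj b hb) hb, clsF_B G u w hb'u hb'w (Fdisj b' hb') hb',
        cVF_o u w ha0u ha0w]
      decide
  have P_CC : ∀ c c', c ≠ u → c ≠ w → ¬ Gᶜ.Adj w c → ¬ Gᶜ.Adj u c →
      c' ≠ u → c' ≠ w → ¬ Gᶜ.Adj w c' → ¬ Gᶜ.Adj u c' → c ≠ c' →
      TRCpair G (cEF G u w) (cVF u w) c c' := by
    intro c c' h1 h2 h3 h4 h1' h2' h3' h4' hne
    refine ⟨Walk.cons (FCu c h1 h4).symm (Walk.cons F1 (Walk.cons (FCw c' h2' h3')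
      Walk.nil)), ?_, ?_⟩
    · simp [Walk.isPath_def, h1, h2, hne, hUW, h1'.symm, h2'.symm]
    · simp only [Walk.edges_cons, Walk.edges_nil, Walk.support_cons, Walk.support_nil,
        List.tail_cons, List.dropLast, List.map_cons, List.map_nil, cEF_mk,
        hclsu, hclsw, hcVu, hcVw, clsF_C G u w h1 h2 h3 h4, clsF_C G u w h1' h2' h3' h4']
      decide
  have P_AC : ∀ a c, Gᶜ.Adj w a → c ≠ u → c ≠ w → ¬ Gᶜ.Adj w c → ¬ Gᶜ.Adj u c → a ≠ c →
      TRCpair G (cEF G u w) (cVF u w) a c := by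
    intro a c ha h1 h2 h3 h4 hne
    have hau : a ≠ u := (F2 a ha).ne'
    have haw : a ≠ w := ha.ne'
    have hab0 : a ≠ b0 := FABne a b0 ha hb0
    have hb0c : b0 ≠ c := by
      rintro rfl
      exact h4 hb0
    refine ⟨Walk.cons (F4 a b0 ha hb0) (Walk.cons (F3 b0 hb0).symm
      (Walk.cons (FCw c h2 h3) Walk.nil)), ?_, ?_⟩
    · simp [Walk.isPath_def, hab0, haw, hne, hb0w, hb0c, h2.symm]
    · simp only [Walk.edges_cons, Walk.edges_nil, Walk.support_cons, Walk.support_nil,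
        List.tail_cons, List.dropLast, List.map_cons, List.map_nil, cEF_mk,
        hclsw, hclsb0, hcVw, clsF_A G u w hau haw ha, clsF_C G u w h1 h2 h3 h4,
        cVF_o u w hb0u hb0w]
      decide
  have P_BC : ∀ b c, Gᶜ.Adj u b → c ≠ u → c ≠ w → ¬ Gᶜ.Adj w c → ¬ Gᶜ.Adj u c → b ≠ c →
      TRCpair G (cEF G u w) (cVF u w) b c := by
    intro b c hb h1 h2 h3 h4 hne
    have hbu : b ≠ u := hb.ne'
    have hbw : b ≠ w := (F3 b hb).ne'
    have ha0b : a0 ≠ b := FABne a0 b ha0 hb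
    have ha0c : a0 ≠ c := by
      rintro rfl
      exact h3 ha0
    refine ⟨Walk.cons (F4 a0 b ha0 hb).symm (Walk.cons (F2 a0 ha0).symm
      (Walk.cons (FCu c h1 h4) Walk.nil)), ?_, ?_⟩
    · simp [Walk.isPath_def, ha0b.symm, hbu, hne, ha0u, ha0c, h1.symm]
    · simp only [Walk.edges_cons, Walk.edges_nil, Walk.support_cons, Walk.support_nil,
        List.tail_cons, List.dropLast, List.map_cons, List.map_nil, cEF_mk,
        hclsu, hclsa0, hcVu, clsF_B G u w hbu hbw (Fdisj b hb) hb,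
        clsF_C G u w h1 h2 h3 h4, cVF_o u w ha0u ha0w]
      decide
  have key : ∀ x y : V, x ≠ y → TRCpair G (cEF G u w) (cVF u w) x y := by
    intro x y hxy
    by_cases hxu : x = u
    · subst hxu
      by_cases hyw : y = w
      · subst hyw; exact P_uw
      by_cases hyA : Gᶜ.Adj w y
      · exact P_uA y hyA
      by_cases hyB : Gᶜ.Adj x y
      · exact P_uB y hyB
      · exact P_uC y (Ne.symm hxy) hyw hyA hyB
    by_cases hxw : x = w
    · subst hxw
      by_cases hyu : y = u
      · subst hyu; exact TRCpair_symm P_uw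
      by_cases hyA : Gᶜ.Adj x y
      · exact P_wA y hyA
      by_cases hyB : Gᶜ.Adj u y
      · exact P_wB y hyB
      · exact P_wC y hyu (Ne.symm hxy) hyA hyB
    by_cases hxA : Gᶜ.Adj w x
    · by_cases hyu : y = u
      · subst hyu; exact TRCpair_symm (P_uA x hxA)
      by_cases hyw : y = w
      · subst hyw; exact TRCpair_symm (P_wA x hxA)
      by_cases hyA : Gᶜ.Adj w y
      · exact P_AA x y hxA hyA hxy
      by_cases hyB : Gᶜ.Adj u y
      · exact P_AB x y hxA hyB
      · exact P_AC x y hxA hyu hyw hyA hyB hxy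
    by_cases hxB : Gᶜ.Adj u x
    · by_cases hyu : y = u
      · subst hyu; exact TRCpair_symm (P_uB x hxB)
      by_cases hyw : y = w
      · subst hyw; exact TRCpair_symm (P_wB x hxB)
      by_cases hyA : Gᶜ.Adj w y
      · exact TRCpair_symm (P_AB y x hyA hxB)
      by_cases hyB : Gᶜ.Adj u y
      · exact P_BB x y hxB hyB hxy
      · exact P_BC x y hxB hyu hyw hyA hyB hxy
    · by_cases hyu : y = u
      · subst hyu; exact TRCpair_symm (P_uC x hxu hxw hxA hxB)
      by_cases hyw : y = w
      · subst hyw; exact TRCpair_symm (P_wC x hxu hxw hxA hxB)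
      by_cases hyA : Gᶜ.Adj w y
      · exact TRCpair_symm (P_AC y x hyA hxu hxw hxA hxB (Ne.symm hxy))
      by_cases hyB : Gᶜ.Adj u y
      · exact TRCpair_symm (P_BC y x hyB hxu hxw hxA hxB (Ne.symm hxy))
      · exact P_CC x y hxu hxw hxA hxB hyu hyw hyA hyB hxy
  have reach : ∀ x, G.Reachable u x := by
    intro x
    by_cases hxu : x = u
    · subst hxu; exact Reachable.refl _
    by_cases hxw : x = w
    · subst hxw; exact F1.reachable
    by_cases hxA : Gᶜ.Adj w x
    · exact (F2 x hxA).reachable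
    by_cases hxB : Gᶜ.Adj u x
    · exact F1.reachable.trans (F3 x hxB).reachable
    · exact (FCu x hxu hxB).reachable
  refine ⟨⟨fun x y => (reach x).symm.trans (reach y)⟩, ?_⟩
  exact Nat.sInf_le ⟨cEF G u w, cVF u w, fun x y hxy => key x y hxy⟩
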